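/- arXiv:1709.00427 — 2 statements merged into one kernel-verified Lean document; each statement's English description precedes it below -/
import Mathlib

section
/- Define S(ν) = ((ν+1)/2)·log((ν+1)/2) − ((ν−1)/2)·log((ν−1)/2) for ν ≥ 1 (with S(1) = 0 by continuity). Then for all ν ≥ 1, one has 0 ≤ S(ν) − log ν < 1 − log 2. -/
open Real Filter Set Topology

/-- Single-mode entanglement entropy of a Gaussian state with symplectic
eigenvalue `ν`. At `ν = 1` the second term is `0` since `Real.log 0 = 0`. -/
noncomputable def entS (ν : ℝ) : ℝ :=
  ((ν + 1) / 2) * Real.log ((ν + 1) / 2) - ((ν - 1) / 2) * Real.log ((ν - 1) / 2)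

/-- Key elementary inequality: `log (1+x) - log (1-x) > 2x` on `(0,1)`. -/
lemma key_log_ineq {x : ℝ} (hx0 : 0 < x) (hx1 : x < 1) :
    2 * x < Real.log (1 + x) - Real.log (1 - x) := by
  set h : ℝ → ℝ := fun t => Real.log (1 + t) - Real.log (1 - t) - 2 * t with hh
  have hmono : StrictMonoOn h (Set.Ico (0:ℝ) 1) := by
    apply strictMonoOn_of_deriv_pos (convex_Ico 0 1)
    · apply ContinuousOn.sub
      apply ContinuousOn.sub
      · exact (continuousOn_const.add continuousOn_id).log
          (fun t ht => by simp only [Set.mem_Ico] at ht; simp only [Pi.add_apply, id_eq]; nlinarith [ht.1])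
      · exact (continuousOn_const.sub continuousOn_id).log
          (fun t ht => by simp only [Set.mem_Ico] at ht; simp only [Pi.sub_apply, id_eq]; nlinarith [ht.2])
      · exact continuousOn_const.mul continuousOn_id
    · intro t ht
      rw [interior_Ico] at ht
      obtain ⟨ht0, ht1⟩ := ht
      have h1 : (0:ℝ) < 1 + t := by linarith
      have h2 : (0:ℝ) < 1 - t := by linarith
      have hd : HasDerivAt h (1 / (1 + t) - (-1) / (1 - t) - 2) t := by
        have d1 : HasDerivAt (fun s : ℝ => Real.log (1 + s)) (1 / (1 + t)) t := by
          simpa using ((hasDerivAt_id t).const_add 1).log h1.ne'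
        have d2 : HasDerivAt (fun s : ℝ => Real.log (1 - s)) ((-1) / (1 - t)) t := by
          simpa using ((hasDerivAt_id t).const_sub 1).log h2.ne'
        have d3 : HasDerivAt (fun s : ℝ => 2 * s) 2 t := by
          simpa using (hasDerivAt_id t).const_mul 2
        exact (d1.sub d2).sub d3
      rw [hd.deriv]
      have heq : 1 / (1 + t) - (-1) / (1 - t) - 2 = 2 * t ^ 2 / ((1 + t) * (1 - t)) := by
        field_simp
        ring
      rw [heq]
      positivity
  have h0 : h 0 = 0 := by simp [hh]
  have := hmono (by simp : (0:ℝ) ∈ Set.Ico (0:ℝ) 1)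
    (by exact ⟨hx0.le, hx1⟩ : x ∈ Set.Ico (0:ℝ) 1) hx0
  rw [h0] at this
  simp only [hh] at this
  linarith

/-- The entropy defect function. -/
noncomputable def fdef (ν : ℝ) : ℝ := entS ν - Real.log ν

lemma fdef_one : fdef 1 = 0 := by
  simp [fdef, entS]

lemma fdef_continuousOn : ContinuousOn fdef (Set.Ici (1:ℝ)) := by
  apply ContinuousOn.sub
  · apply ContinuousOn.sub
    · exact (Real.continuous_mul_log.comp (by continuity)).continuousOn
    · exact (Real.continuous_mul_log.comp (by continuity)).continuousOn
  · exact continuousOn_id.log (fun ν hν => by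
      simp only [Set.mem_Ici] at hν; simp only [id]; linarith)

lemma fdef_hasDerivAt {ν : ℝ} (hν : 1 < ν) :
    HasDerivAt fdef ((Real.log ((ν + 1) / 2) - Real.log ((ν - 1) / 2)) / 2 - 1 / ν) ν := by
  have ha : ((ν + 1) / 2 : ℝ) ≠ 0 := by positivity
  have hb : ((ν - 1) / 2 : ℝ) ≠ 0 := by
    have : (0:ℝ) < (ν - 1) / 2 := by linarith
    exact this.ne'
  have d1 : HasDerivAt (fun x : ℝ => ((x + 1) / 2) * Real.log ((x + 1) / 2))
      ((Real.log ((ν + 1) / 2) + 1) * (1 / 2)) ν := by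
    have inner : HasDerivAt (fun x : ℝ => (x + 1) / 2) (1 / 2) ν := by
      simpa using ((hasDerivAt_id ν).add_const 1).div_const 2
    exact (Real.hasDerivAt_mul_log ha).comp ν inner
  have d2 : HasDerivAt (fun x : ℝ => ((x - 1) / 2) * Real.log ((x - 1) / 2))
      ((Real.log ((ν - 1) / 2) + 1) * (1 / 2)) ν := by
    have inner : HasDerivAt (fun x : ℝ => (x - 1) / 2) (1 / 2) ν := by
      simpa using ((hasDerivAt_id ν).sub_const 1).div_const 2
    exact (Real.hasDerivAt_mul_log hb).comp ν inner
  have d3 : HasDerivAt Real.log (1 / ν) ν := by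
    simpa [Real.deriv_log, one_div] using Real.hasDerivAt_log (by linarith : ν ≠ 0)
  have := (d1.sub d2).sub d3
  have e : (Real.log ((ν + 1) / 2) - Real.log ((ν - 1) / 2)) / 2 - 1 / ν =
      (Real.log ((ν + 1) / 2) + 1) * (1 / 2) - (Real.log ((ν - 1) / 2) + 1) * (1 / 2) - 1 / ν := by
    ring
  rw [e]
  exact this

lemma fdef_deriv_pos {ν : ℝ} (hν : 1 < ν) : 0 < deriv fdef ν := by
  rw [(fdef_hasDerivAt hν).deriv]
  have hν0 : (0:ℝ) < ν := by linarith
  set x := 1 / ν with hx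
  have hx0 : 0 < x := by positivity
  have hx1 : x < 1 := by rw [hx]; rw [div_lt_one hν0]; linarith
  have hkey := key_log_ineq hx0 hx1
  have e1 : Real.log (1 + x) = Real.log (ν + 1) - Real.log ν := by
    rw [hx, show 1 + 1 / ν = (ν + 1) / ν by field_simp,
      Real.log_div (by linarith) hν0.ne']
  have e2 : Real.log (1 - x) = Real.log (ν - 1) - Real.log ν := by
    rw [hx, show 1 - 1 / ν = (ν - 1) / ν by field_simp,
      Real.log_div (by linarith : ν - 1 ≠ 0) hν0.ne']
  have e3 : Real.log ((ν + 1) / 2) = Real.log (ν + 1) - Real.log 2 :=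
    Real.log_div (by linarith) two_ne_zero
  have e4 : Real.log ((ν - 1) / 2) = Real.log (ν - 1) - Real.log 2 :=
    Real.log_div (by linarith : ν - 1 ≠ 0) two_ne_zero
  rw [e3, e4]
  rw [e1, e2] at hkey
  linarith

lemma fdef_strictMonoOn : StrictMonoOn fdef (Set.Ici (1:ℝ)) := by
  apply strictMonoOn_of_deriv_pos (convex_Ici 1) fdef_continuousOn
  intro ν hν
  rw [interior_Ici] at hν
  exact fdef_deriv_pos hν

lemma fdef_tendsto : Tendsto fdef atTop (𝓝 (1 - Real.log 2)) := by
  have heq : ∀ᶠ ν in atTop, Real.log ((ν + 1) / (2 * ν)) +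
      (1 / 2) * ((ν - 1) * Real.log (1 + 2 / (ν - 1))) = fdef ν := by
    filter_upwards [eventually_gt_atTop (1:ℝ)] with ν hν
    have h1 : (0:ℝ) < ν + 1 := by linarith
    have h2 : (0:ℝ) < ν - 1 := by linarith
    have h0 : (0:ℝ) < ν := by linarith
    have e0 : 1 + 2 / (ν - 1) = (ν + 1) / (ν - 1) := by field_simp; ring
    rw [e0, Real.log_div h1.ne' h2.ne',
      Real.log_div h1.ne' (by positivity : (2 * ν : ℝ) ≠ 0),
      Real.log_mul two_ne_zero h0.ne']
    simp only [fdef, entS,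
      Real.log_div h1.ne' (two_ne_zero), Real.log_div h2.ne' (two_ne_zero)]
    ring
  have t1 : Tendsto (fun ν : ℝ => Real.log ((ν + 1) / (2 * ν))) atTop
      (𝓝 (Real.log (1 / 2))) := by
    have hr : Tendsto (fun ν : ℝ => (ν + 1) / (2 * ν)) atTop (𝓝 (1 / 2)) := by
      have : ∀ᶠ ν : ℝ in atTop, 1 / 2 + (1 / 2) * ν⁻¹ = (ν + 1) / (2 * ν) := by
        filter_upwards [eventually_gt_atTop (0:ℝ)] with ν hν
        field_simp
      have base : Tendsto (fun ν : ℝ => 1 / 2 + (1 / 2) * ν⁻¹) atTop (𝓝 (1 / 2)) := by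
        have := tendsto_inv_atTop_zero.const_mul (1/2 : ℝ)
        simpa using tendsto_const_nhds.add this
      exact base.congr' this
    exact (Real.continuousAt_log (by norm_num)).tendsto.comp hr
  have t2 : Tendsto (fun ν : ℝ => (ν - 1) * Real.log (1 + 2 / (ν - 1))) atTop (𝓝 2) := by
    have := (Real.tendsto_mul_log_one_add_div_atTop 2).comp
      (tendsto_atTop_add_const_right atTop (-1) tendsto_id)
    simpa [Function.comp_def, sub_eq_add_neg] using this
  have := t1.add (t2.const_mul (1/2 : ℝ))
  have hval : Real.log (1 / 2) + (1 / 2) * 2 = 1 - Real.log 2 := by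
    rw [one_div, Real.log_inv]; ring
  rw [hval] at this
  exact this.congr' heq

theorem entS_sub_log_bounds (ν : ℝ) (hν : 1 ≤ ν) :
    0 ≤ entS ν - Real.log ν ∧ entS ν - Real.log ν < 1 - Real.log 2 := by
  have hmem : ν ∈ Set.Ici (1:ℝ) := hν
  have hlow : 0 ≤ fdef ν := by
    rcases eq_or_lt_of_le hν with h | h
    · rw [← h, fdef_one]
    · have := fdef_strictMonoOn (Set.self_mem_Ici) hmem h
      rw [fdef_one] at this
      exact this.le
  have hupper : fdef ν < 1 - Real.log 2 := by
    have h1 : fdef ν < fdef (ν + 1) :=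
      fdef_strictMonoOn hmem (by simp only [Set.mem_Ici]; linarith) (by linarith)
    have h2 : fdef (ν + 1) ≤ 1 - Real.log 2 := by
      apply ge_of_tendsto fdef_tendsto
      filter_upwards [eventually_ge_atTop (ν + 1)] with t ht
      exact (fdef_strictMonoOn.monotoneOn (by simp only [Set.mem_Ici]; linarith)
        (by simp only [Set.mem_Ici]; linarith) ht)
    linarith
  exact ⟨hlow, hupper⟩
end

section
/- Let Ω be the standard symplectic form on ℝ^{2N}, ω = Ω^{−1}, and let G be a symmetric positive definite 2N×2N matrix. Define J = −Gω. Suppose a subsystem A is given by a symplectic subspace with symplectic Darboux basis, so that the restricted symplectic form ω_A has determinant 1 and the restricted complex structure satisfies [J]_A = −[G]_A ω_A. Then |det([iJ]_A)| = det([G]_A); equivalently, |det([J]_A)| equals the square of the volume Vol_G(𝒱_A) of the unit symplectic cube of A measured in the metric G. Hence the Rényi-2 entropy R_A = ½ log|det([iJ]_A)| equals log Vol_G(𝒱_A). -/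
open Matrix

/-- The standard symplectic form `Ω = [[0, I], [-I, 0]]`. -/
def stdSymp (N : ℕ) : Matrix (Fin N ⊕ Fin N) (Fin N ⊕ Fin N) ℝ :=
  Matrix.fromBlocks 0 1 (-1) 0

lemma stdSymp_mul_self (N : ℕ) : stdSymp N * stdSymp N = -1 := by
  rw [stdSymp, Matrix.fromBlocks_multiply]
  rw [show (-1 : Matrix (Fin N ⊕ Fin N) (Fin N ⊕ Fin N) ℝ) =
    Matrix.fromBlocks (-1) (-0) (-0) (-1) by rw [← Matrix.fromBlocks_neg, Matrix.fromBlocks_one]]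
  simp

lemma stdSymp_det_sq (N : ℕ) : (stdSymp N).det ^ 2 = 1 := by
  have h := congrArg Matrix.det (stdSymp_mul_self N)
  rw [Matrix.det_mul, Matrix.det_neg, Matrix.det_one] at h
  have hcard : Fintype.card (Fin N ⊕ Fin N) = 2 * N := by simp [two_mul]
  rw [hcard] at h
  simpa [pow_mul, sq] using h

lemma stdSymp_isUnit_det (N : ℕ) : IsUnit (stdSymp N).det := by
  have := stdSymp_det_sq N
  have : (stdSymp N).det ≠ 0 := by
    intro h; rw [h] at this; simpa using this
  exact isUnit_iff_ne_zero.mpr this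

/-- Rényi entropy as a phase-space volume: for `J = -Gω` with `G` symmetric positive
definite, and a symplectic subsystem given by a Darboux basis (rows of `T`, so that
the restricted symplectic form `T Ω Tᵀ` is standard with `det ω_A = 1`), the
restricted complex structure `[J]_A = -[G]_A ω_A` satisfies
`|det([iJ]_A)| = det([G]_A) = Vol_G(𝒱_A)²`, hence
`R_A = ½ log|det([iJ]_A)| = log Vol_G(𝒱_A)` with `Vol_G(𝒱_A) = √(det [G]_A)`. -/
theorem renyi_as_phase_space_volume (N m : ℕ)
    (G : Matrix (Fin N ⊕ Fin N) (Fin N ⊕ Fin N) ℝ)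
    (hG : G.PosDef) (hGsymm : Gᵀ = G)
    (T : Matrix (Fin m ⊕ Fin m) (Fin N ⊕ Fin N) ℝ)
    (hDarboux : T * stdSymp N * Tᵀ = stdSymp m) :
    ‖(Complex.I • ((-(T * G * Tᵀ) * (stdSymp m)⁻¹).map
        (Complex.ofReal))).det‖ = (T * G * Tᵀ).det ∧
    (1 / 2) * Real.log ‖(Complex.I • ((-(T * G * Tᵀ) * (stdSymp m)⁻¹).map
        (Complex.ofReal))).det‖ = Real.log (Real.sqrt (T * G * Tᵀ).det) := by
  set M := T * G * Tᵀ with hMdef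
  -- M is positive definite
  have hMpos : M.PosDef := by
    refine Matrix.PosDef.of_dotProduct_mulVec_pos ?_ ?_
    · show Mᴴ = M
      simp only [hMdef, Matrix.conjTranspose_eq_transpose_of_trivial,
        Matrix.transpose_mul, Matrix.transpose_transpose, hGsymm, Matrix.mul_assoc]
    · intro x hx
      have hTx : Tᵀ *ᵥ x ≠ 0 := by
        intro h
        have h1 : (T * stdSymp N * Tᵀ) *ᵥ x = 0 := by
          rw [Matrix.mul_assoc, ← Matrix.mulVec_mulVec, ← Matrix.mulVec_mulVec, h]
          simp
        rw [hDarboux] at h1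
        have h2 : (stdSymp m * stdSymp m) *ᵥ x = 0 := by
          rw [← Matrix.mulVec_mulVec, h1]; simp
        rw [stdSymp_mul_self] at h2
        apply hx
        simpa [Matrix.neg_mulVec, neg_eq_zero] using h2
      have : star x ⬝ᵥ M *ᵥ x = star (Tᵀ *ᵥ x) ⬝ᵥ G *ᵥ (Tᵀ *ᵥ x) := by
        simp only [hMdef, star_trivial]
        rw [Matrix.mul_assoc, ← Matrix.mulVec_mulVec, Matrix.dotProduct_mulVec,
          Matrix.dotProduct_mulVec, Matrix.vecMul_vecMul, ← Matrix.vecMul_transpose]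
        rw [Matrix.transpose_transpose, Matrix.dotProduct_mulVec, Matrix.vecMul_vecMul,
          ← Matrix.mulVec_transpose T, Matrix.dotProduct_mulVec, Matrix.vecMul_vecMul,
          Matrix.mul_assoc]
      rw [this]
      exact hG.dotProduct_mulVec_pos hTx
  have hMdet : 0 < M.det := hMpos.det_pos
  -- determinant of the inverse symplectic form has absolute value 1
  have hΩinv : |((stdSymp m)⁻¹).det| = 1 := by
    rw [Matrix.det_nonsing_inv, Ring.inverse_eq_inv, abs_inv]
    have h2 := stdSymp_det_sq m
    have habs : |(stdSymp m).det| = 1 := by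
      nlinarith [abs_nonneg (stdSymp m).det, sq_abs (stdSymp m).det]
    rw [habs, inv_one]
  -- compute the main absolute value
  have hcard : Fintype.card (Fin m ⊕ Fin m) = 2 * m := by simp [two_mul]
  have key : ‖(Complex.I • ((-M * (stdSymp m)⁻¹).map
      (Complex.ofReal))).det‖ = M.det := by
    rw [Matrix.det_smul, hcard]
    rw [norm_mul, norm_pow, Complex.norm_I, one_pow, one_mul]
    have : ((-M * (stdSymp m)⁻¹).map Complex.ofReal).det
        = Complex.ofReal ((-M * (stdSymp m)⁻¹).det) :=
      (RingHom.map_det Complex.ofRealHom _).symm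
    rw [this, Complex.norm_real, Real.norm_eq_abs, Matrix.det_mul, Matrix.det_neg, hcard, abs_mul, abs_mul,
      abs_pow, abs_neg, abs_one, one_pow, one_mul, hΩinv, mul_one, abs_of_pos hMdet]
  refine ⟨key, ?_⟩
  rw [key, Real.log_sqrt hMdet.le]
  ring
end
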